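/- Let Γ₁ and Γ₂ be nontrivial countable groups and let Γ = Γ₁ * Γ₂ be their free product. Let λ : Γ → O(ℓ²_ℝ(Γ)) be the left regular orthogonal representation, (λ(g)f)(h) = f(g⁻¹h). Then there exists an unbounded 1-cocycle for λ: a map c : Γ → ℓ²_ℝ(Γ) satisfying c(gh) = c(g) + λ(g)c(h) for all g,h ∈ Γ, with sup_{g∈Γ} ‖c(g)‖ = ∞. -/

import Mathlib

open scoped Monoid

namespace Stmt14Aux

open Monoid Monoid.CoprodI

universe u v

variable (Γ₁ : Type u) (Γ₂ : Type v) [Group Γ₁] [Group Γ₂]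

/-- The two-element family of groups. -/
def Gfam : Bool → Type (max u v) := fun b => Bool.rec (ULift.{u} Γ₂) (ULift.{v} Γ₁) b

instance (b : Bool) : Group (Gfam Γ₁ Γ₂ b) :=
  Bool.rec (inferInstanceAs (Group (ULift Γ₂))) (inferInstanceAs (Group (ULift Γ₁))) b

noncomputable instance (b : Bool) : DecidableEq (Gfam Γ₁ Γ₂ b) := Classical.decEq _

variable {Γ₁ Γ₂}

/-- index of the last letter of a word -/
def lastIdx (w : Word (Gfam Γ₁ Γ₂)) : Option Bool := w.toList.getLast?.map Sigma.fst

/-- 1 iff the normal form ends with a `Γ₂`-letter -/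
noncomputable def fC (x : CoprodI (Gfam Γ₁ Γ₂)) : ℝ :=
  if lastIdx (Word.equiv x) = some false then 1 else 0

lemma equiv_mul (u x : CoprodI (Gfam Γ₁ Γ₂)) :
    Word.equiv (u * x) = u • Word.equiv x := by
  simp only [Word.equiv, Equiv.coe_fn_mk]
  rw [mul_smul]

lemma equiv_one : (Word.equiv (1 : CoprodI (Gfam Γ₁ Γ₂))) = Word.empty := by
  simp only [Word.equiv, Equiv.coe_fn_mk]
  rw [one_smul]

lemma step {i : Bool} (u : Gfam Γ₁ Γ₂ i) (x : CoprodI (Gfam Γ₁ Γ₂))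
    (hx1 : x ≠ 1) (hx2 : x ≠ CoprodI.of u⁻¹) : fC (CoprodI.of u * x) = fC x := by
  rcases eq_or_ne u 1 with rfl | hu
  · simp
  have hxw : x = Word.prod (Word.equiv x) := (Word.equiv.symm_apply_apply x).symm
  set w := Word.equiv x with hw
  suffices h : lastIdx (CoprodI.of u • w) = lastIdx w by
    unfold fC
    rw [equiv_mul, ← hw, h]
  rcases hL : w.toList with _ | ⟨⟨j, m⟩, rest⟩
  · exfalso
    apply hx1
    apply Word.equiv.injective
    rw [← hw, equiv_one]
    exact Word.ext hL
  · have hm1 : m ≠ 1 := w.ne_one ⟨j, m⟩ (by rw [hL]; exact List.mem_cons_self)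
    have hch : w.toList.Chain' fun l l' => l.1 ≠ l'.1 := w.chain_ne
    rw [hL] at hch
    let w' : Word (Gfam Γ₁ Γ₂) :=
      ⟨rest, fun l hl => w.ne_one l (by rw [hL]; exact List.mem_cons_of_mem _ hl), hch.tail⟩
    have hw't : w'.toList = rest := rfl
    have hfst : w'.fstIdx ≠ some j := by
      rw [Word.fstIdx_ne_iff]
      intro l hl
      exact (List.isChain_cons.mp hch).1 l hl
    have hwc : w = Word.cons m w' hfst hm1 := Word.ext (by simpa using hL)
    by_cases hji : j = i
    · subst hji
      have hep : Word.equivPair j w = ⟨m, w', hfst⟩ := by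
        have hr : Word.rcons (⟨m, w', hfst⟩ : Word.Pair _ j) = w := by
          rw [Word.rcons, dif_neg hm1]; exact hwc.symm
        rw [← hr, ← Word.equivPair_symm, Equiv.apply_symm_apply]
      rw [Word.of_smul_def, hep]
      simp only []
      by_cases hum : u * m = 1
      · rw [Word.rcons, dif_pos hum]
        show lastIdx w' = lastIdx w
        rcases hR : rest with _ | ⟨r, t⟩
        · exfalso
          apply hx2
          rw [hxw, hwc, Word.prod_cons]
          have hw'e : w' = Word.empty := Word.ext (hw't.trans hR)
          rw [hw'e, Word.prod_empty, mul_one, inv_eq_of_mul_eq_one_right hum]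
        · rw [hwc]
          simp [lastIdx, Word.cons, hw't, hR, List.getLast?_cons_cons]
      · rw [Word.rcons, dif_neg hum]
        rw [hwc]
        rcases hR : rest with _ | ⟨r, t⟩
        · simp [lastIdx, Word.cons, hw't, hR]
        · simp [lastIdx, Word.cons, hw't, hR, List.getLast?_cons_cons]
    · have hne : w.fstIdx ≠ some i := by
        rw [Word.fstIdx_ne_iff]
        intro l hl
        rw [hL] at hl
        simp at hl
        subst hl
        exact Ne.symm hji
      have hep : Word.equivPair i w = ⟨1, w, hne⟩ := Word.equivPair_eq_of_fstIdx_ne hne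
      rw [Word.of_smul_def, hep]
      simp only [mul_one]
      rw [Word.rcons, dif_neg hu]
      show lastIdx (Word.cons u w _ _) = lastIdx w
      simp only [lastIdx, Word.cons]
      rw [hL, List.getLast?_cons_cons]

section Bridge

/-- up as a hom. -/
def upHom₁ : Γ₁ →* (Gfam Γ₁ Γ₂ true) where
  toFun a := ULift.up a
  map_one' := rfl
  map_mul' _ _ := rfl

def upHom₂ : Γ₂ →* (Gfam Γ₁ Γ₂ false) where
  toFun a := ULift.up a
  map_one' := rfl
  map_mul' _ _ := rfl

def downHom₁ : (Gfam Γ₁ Γ₂ true) →* Γ₁ where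
  toFun a := ULift.down a
  map_one' := rfl
  map_mul' _ _ := rfl

def downHom₂ : (Gfam Γ₁ Γ₂ false) →* Γ₂ where
  toFun a := ULift.down a
  map_one' := rfl
  map_mul' _ _ := rfl

variable (Γ₁ Γ₂) in
/-- The canonical hom from the binary coproduct to the indexed one. -/
def phi : Monoid.Coprod Γ₁ Γ₂ →* CoprodI (Gfam Γ₁ Γ₂) :=
  Coprod.lift ((CoprodI.of (M := Gfam Γ₁ Γ₂) (i := true)).comp upHom₁)
    ((CoprodI.of (M := Gfam Γ₁ Γ₂) (i := false)).comp upHom₂)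

variable (Γ₁ Γ₂) in
/-- The canonical hom back. -/
def psi : CoprodI (Gfam Γ₁ Γ₂) →* Monoid.Coprod Γ₁ Γ₂ :=
  CoprodI.lift fun b => Bool.rec (Coprod.inr.comp downHom₂) (Coprod.inl.comp downHom₁) b

lemma phi_inl (m : Γ₁) : phi Γ₁ Γ₂ (Coprod.inl m : Monoid.Coprod Γ₁ Γ₂) =
    CoprodI.of (M := Gfam Γ₁ Γ₂) (i := true) (ULift.up m) := by
  simp [phi]
  rfl

lemma phi_inr (m : Γ₂) : phi Γ₁ Γ₂ (Coprod.inr m : Monoid.Coprod Γ₁ Γ₂) =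
    CoprodI.of (M := Gfam Γ₁ Γ₂) (i := false) (ULift.up m) := by
  simp [phi]
  rfl

lemma psi_phi (x : Monoid.Coprod Γ₁ Γ₂) : psi Γ₁ Γ₂ (phi Γ₁ Γ₂ x) = x := by
  have h : ((psi Γ₁ Γ₂).comp ((phi Γ₁ Γ₂) : Monoid.Coprod Γ₁ Γ₂ →* _)) = MonoidHom.id _ := by
    apply Coprod.hom_ext
    · ext a
      simp [phi_inl, psi, CoprodI.lift_of]
      rfl
    · ext a
      simp [phi_inr, psi, CoprodI.lift_of]
      rfl
  exact DFunLike.congr_fun h x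

lemma phi_injective : Function.Injective (phi Γ₁ Γ₂) := by
  intro x y h
  have := congrArg (psi Γ₁ Γ₂) h
  rwa [psi_phi, psi_phi] at this

end Bridge

section Cocycle

/-- The potential function on the binary coproduct. -/
noncomputable def fcn (x : Monoid.Coprod Γ₁ Γ₂) : ℝ := fC (phi Γ₁ Γ₂ x)

/-- The cocycle, as a bare function. -/
noncomputable def Fcn (g x : Monoid.Coprod Γ₁ Γ₂) : ℝ := fcn (g⁻¹ * x) - fcn x

lemma fcn_one : fcn (1 : Monoid.Coprod Γ₁ Γ₂) = 0 := by
  simp only [fcn, map_one, fC, equiv_one]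
  simp [lastIdx, Word.empty]

lemma step' {i : Bool} (u : Gfam Γ₁ Γ₂ i) (x : Monoid.Coprod Γ₁ Γ₂)
    (hx1 : x ≠ 1) (hx2 : phi Γ₁ Γ₂ x ≠ CoprodI.of u⁻¹) :
    fC (CoprodI.of u * phi Γ₁ Γ₂ x) = fcn x := by
  apply step u (phi Γ₁ Γ₂ x) _ hx2
  intro h
  exact hx1 (phi_injective (h.trans (map_one _).symm))

lemma S_inl (m : Γ₁) :
    {x : Monoid.Coprod Γ₁ Γ₂ | fcn ((Coprod.inl m)⁻¹ * x) ≠ fcn x} ⊆ {1, Coprod.inl m} := by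
  intro x hx
  by_contra hno
  simp only [Set.mem_insert_iff, Set.mem_singleton_iff, not_or] at hno
  apply hx
  show fcn _ = fcn x
  rw [fcn, map_mul, map_inv, phi_inl]
  exact (congrArg (fun t => fC (t * phi Γ₁ Γ₂ x))
    (map_inv (CoprodI.of (M := Gfam Γ₁ Γ₂) (i := true)) (ULift.up m))).symm.trans
    (step' (i := true) (ULift.up m : Gfam Γ₁ Γ₂ true)⁻¹ x hno.1
      (fun h => hno.2 (phi_injective (h.trans ((congrArg (CoprodI.of (M := Gfam Γ₁ Γ₂) (i := true))
        (inv_inv (ULift.up m : Gfam Γ₁ Γ₂ true))).trans (phi_inl m).symm)))))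

lemma S_inr (m : Γ₂) :
    {x : Monoid.Coprod Γ₁ Γ₂ | fcn ((Coprod.inr m)⁻¹ * x) ≠ fcn x} ⊆ {1, Coprod.inr m} := by
  intro x hx
  by_contra hno
  simp only [Set.mem_insert_iff, Set.mem_singleton_iff, not_or] at hno
  apply hx
  show fcn _ = fcn x
  rw [fcn, map_mul, map_inv, phi_inr]
  exact (congrArg (fun t => fC (t * phi Γ₁ Γ₂ x))
    (map_inv (CoprodI.of (M := Gfam Γ₁ Γ₂) (i := false)) (ULift.up m))).symm.trans
    (step' (i := false) (ULift.up m : Gfam Γ₁ Γ₂ false)⁻¹ x hno.1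
      (fun h => hno.2 (phi_injective (h.trans ((congrArg (CoprodI.of (M := Gfam Γ₁ Γ₂) (i := false))
        (inv_inv (ULift.up m : Gfam Γ₁ Γ₂ false))).trans (phi_inr m).symm)))))

lemma S_finite (g : Monoid.Coprod Γ₁ Γ₂) :
    {x : Monoid.Coprod Γ₁ Γ₂ | fcn (g⁻¹ * x) ≠ fcn x}.Finite := by
  induction g using Coprod.induction_on' with
  | one => simp
  | inl_mul m y ih =>
      have hsub : {x : Monoid.Coprod Γ₁ Γ₂ | fcn ((Coprod.inl m * y)⁻¹ * x) ≠ fcn x} ⊆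
          ((fun z => Coprod.inl m * z) '' {x | fcn (y⁻¹ * x) ≠ fcn x}) ∪
            {x | fcn ((Coprod.inl m)⁻¹ * x) ≠ fcn x} := by
        intro x hx
        by_contra hno
        simp only [Set.mem_union, Set.mem_image, Set.mem_setOf_eq, not_or, not_exists,
          not_and] at hno
        apply hx
        show fcn _ = fcn x
        have h2 : fcn ((Coprod.inl m)⁻¹ * x) = fcn x := by
          by_contra h; exact hno.2 h
        have h1 : fcn (y⁻¹ * ((Coprod.inl m)⁻¹ * x)) = fcn ((Coprod.inl m)⁻¹ * x) := by
          by_contra h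
          exact hno.1 ((Coprod.inl m)⁻¹ * x) h (by group)
        rw [mul_inv_rev, mul_assoc, h1, h2]
      exact (((ih.image _).union (((Set.finite_singleton _).insert _).subset
        (S_inl m))).subset hsub)
  | inr_mul m y ih =>
      have hsub : {x : Monoid.Coprod Γ₁ Γ₂ | fcn ((Coprod.inr m * y)⁻¹ * x) ≠ fcn x} ⊆
          ((fun z => Coprod.inr m * z) '' {x | fcn (y⁻¹ * x) ≠ fcn x}) ∪
            {x | fcn ((Coprod.inr m)⁻¹ * x) ≠ fcn x} := by
        intro x hx
        by_contra hno
        simp only [Set.mem_union, Set.mem_image, Set.mem_setOf_eq, not_or, not_exists,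
          not_and] at hno
        apply hx
        show fcn _ = fcn x
        have h2 : fcn ((Coprod.inr m)⁻¹ * x) = fcn x := by
          by_contra h; exact hno.2 h
        have h1 : fcn (y⁻¹ * ((Coprod.inr m)⁻¹ * x)) = fcn ((Coprod.inr m)⁻¹ * x) := by
          by_contra h
          exact hno.1 ((Coprod.inr m)⁻¹ * x) h (by group)
        rw [mul_inv_rev, mul_assoc, h1, h2]
      exact (((ih.image _).union (((Set.finite_singleton _).insert _).subset
        (S_inr m))).subset hsub)

end Cocycle

section Words

lemma getLast?_cons_ne_nil {α : Type*} (x : α) {L : List α} (h : L ≠ []) :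
    (x :: L).getLast? = L.getLast? := by
  cases L with
  | nil => exact absurd rfl h
  | cons y t => exact List.getLast?_cons_cons

/-- alternating list `A B A B ... A` with `k+1` occurrences of `A`. -/
def altList (A B : Σ i, Gfam Γ₁ Γ₂ i) : ℕ → List (Σ i, Gfam Γ₁ Γ₂ i)
  | 0 => [A]
  | k + 1 => A :: B :: altList A B k

variable {A B : Σ i, Gfam Γ₁ Γ₂ i}

lemma altList_ne_nil (k : ℕ) : altList A B k ≠ [] := by
  cases k <;> simp [altList]

lemma altList_head? (k : ℕ) : (altList A B k).head? = some A := by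
  cases k <;> rfl

lemma altList_getLast? (k : ℕ) : (altList A B k).getLast? = some A := by
  induction k with
  | zero => rfl
  | succ k ih =>
      rw [altList, getLast?_cons_ne_nil _ (by simp), getLast?_cons_ne_nil _ (altList_ne_nil k)]
      exact ih

lemma altList_length (k : ℕ) : (altList A B k).length = 2 * k + 1 := by
  induction k with
  | zero => rfl
  | succ k ih => simp [altList, ih]; ring

lemma altList_ne_one (hA : A.2 ≠ 1) (hB : B.2 ≠ 1) (k : ℕ) :
    ∀ l ∈ altList A B k, l.2 ≠ 1 := by
  induction k with
  | zero => simpa [altList] using hA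
  | succ k ih =>
      intro l hl
      rw [altList] at hl
      simp only [List.mem_cons] at hl
      rcases hl with rfl | rfl | hl
      · exact hA
      · exact hB
      · exact ih l hl

lemma altList_chain (hAB : A.1 ≠ B.1) (k : ℕ) :
    (altList A B k).Chain' fun l l' => l.1 ≠ l'.1 := by
  induction k with
  | zero => exact List.isChain_singleton _
  | succ k ih =>
      rw [altList]
      refine List.isChain_cons_cons.mpr ⟨hAB, List.isChain_cons.mpr ⟨?_, ih⟩⟩
      intro y hy
      rw [altList_head? k] at hy
      cases hy
      exact hAB.symm

/-- The alternating word. -/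
def altWord (hA : A.2 ≠ 1) (hB : B.2 ≠ 1) (hAB : A.1 ≠ B.1) (k : ℕ) : Word (Gfam Γ₁ Γ₂) :=
  ⟨altList A B k, altList_ne_one hA hB k, altList_chain hAB k⟩

lemma altWord_prod (hA : A.2 ≠ 1) (hB : B.2 ≠ 1) (hAB : A.1 ≠ B.1) (k : ℕ) :
    (altWord hA hB hAB k).prod = (CoprodI.of A.2 * CoprodI.of B.2) ^ k * CoprodI.of A.2 := by
  induction k with
  | zero => simp [altWord, Word.prod, altList]
  | succ k ih =>
      have : (altWord hA hB hAB (k + 1)).prod =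
          CoprodI.of A.2 * (CoprodI.of B.2 * (altWord hA hB hAB k).prod) := by
        simp [altWord, Word.prod, altList, mul_assoc]
      rw [this, ih, pow_succ']
      group
  
lemma equiv_prod (w : Word (Gfam Γ₁ Γ₂)) : Word.equiv w.prod = w := by
  rw [show w.prod = Word.equiv.symm w from rfl, Equiv.apply_symm_apply]

lemma fC_altWord_prod (hA : A.2 ≠ 1) (hB : B.2 ≠ 1) (hAB : A.1 ≠ B.1) (k : ℕ) :
    fC (altWord hA hB hAB k).prod = if A.1 = false then 1 else 0 := by
  rw [fC, equiv_prod]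
  have h : lastIdx (altWord hA hB hAB k) = some A.1 := by
    rw [lastIdx]
    show ((altList A B k).getLast?).map _ = _
    rw [altList_getLast?]
    rfl
  rw [h]
  by_cases hA1 : A.1 = false <;> simp [hA1]

lemma pow_inv_mul {G : Type*} [Group G] (x y : G) (m : ℕ) :
    ((x * y) ^ (m + 1))⁻¹ * x = (y⁻¹ * x⁻¹) ^ m * y⁻¹ := by
  induction m with
  | zero => group
  | succ m ih =>
      rw [pow_succ (x * y), mul_inv_rev, mul_assoc, ih, pow_succ' (y⁻¹ * x⁻¹)]
      group

end Words

end Stmt14Aux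

open Stmt14Aux

/-- the free product `Γ = Γ₁ ∗ Γ₂` of two nontrivial countable groups
admits an unbounded 1-cocycle `c : Γ → ℓ²_ℝ(Γ)` for the left regular orthogonal
representation `(λ(g)f)(h) = f(g⁻¹h)`; the cocycle identity `c(gh) = c(g) + λ(g)c(h)`
is expressed pointwise. -/
theorem stmt14 (Γ₁ Γ₂ : Type*) [Group Γ₁] [Group Γ₂] [Countable Γ₁] [Countable Γ₂]
    [Nontrivial Γ₁] [Nontrivial Γ₂] :
    ∃ c : Monoid.Coprod Γ₁ Γ₂ → lp (fun _ : Monoid.Coprod Γ₁ Γ₂ => ℝ) 2,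
      (∀ g h k : Monoid.Coprod Γ₁ Γ₂, c (g * h) k = c g k + c h (g⁻¹ * k)) ∧
      ¬ BddAbove (Set.range fun g : Monoid.Coprod Γ₁ Γ₂ => ‖c g‖) := by
  classical
  have htoReal : (0 : ℝ) < (2 : ENNReal).toReal := by norm_num
  have hmem : ∀ g : Monoid.Coprod Γ₁ Γ₂, Memℓp (Fcn g) 2 := by
    intro g
    apply memℓp_gen
    have hfin : {x : Monoid.Coprod Γ₁ Γ₂ | Fcn g x ≠ 0}.Finite := by
      apply (S_finite g).subset
      intro x hx
      simp only [Set.mem_setOf_eq, Fcn] at hx ⊢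
      exact sub_ne_zero.mp hx
    apply summable_of_ne_finset_zero (s := hfin.toFinset)
    intro x hx
    have : Fcn g x = 0 := by
      by_contra h
      exact hx (hfin.mem_toFinset.mpr h)
    rw [this]
    simp only [norm_zero]
    rw [Real.zero_rpow (ne_of_gt htoReal)]
  set c : Monoid.Coprod Γ₁ Γ₂ → lp (fun _ : Monoid.Coprod Γ₁ Γ₂ => ℝ) 2 :=
    fun g => ⟨Fcn g, hmem g⟩ with hc
  have happ : ∀ g x, c g x = Fcn g x := fun g x => rfl
  refine ⟨c, ?_, ?_⟩
  · intro g h k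
    rw [happ, happ, happ]
    simp only [Fcn, mul_inv_rev, mul_assoc]
    ring
  · intro hbdd
    obtain ⟨M, hM⟩ := hbdd
    have hMnorm : ∀ g, ‖c g‖ ≤ M := fun g => hM ⟨g, rfl⟩
    have hM0 : (0 : ℝ) ≤ M := le_trans (norm_nonneg _) (hMnorm 1)
    obtain ⟨n, hn⟩ := exists_nat_gt (M ^ (2:ℝ))
    obtain ⟨a, ha⟩ := exists_ne (1 : Γ₁)
    obtain ⟨b, hb⟩ := exists_ne (1 : Γ₂)
    set A : Σ i, Gfam Γ₁ Γ₂ i := ⟨true, ULift.up a⟩ with hA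
    set B : Σ i, Gfam Γ₁ Γ₂ i := ⟨false, ULift.up b⟩ with hB
    set A' : Σ i, Gfam Γ₁ Γ₂ i := ⟨true, (ULift.up a)⁻¹⟩ with hA'
    set B' : Σ i, Gfam Γ₁ Γ₂ i := ⟨false, (ULift.up b)⁻¹⟩ with hB'
    have hA2 : A.2 ≠ 1 := fun h => ha (congrArg ULift.down h)
    have hB2 : B.2 ≠ 1 := fun h => hb (congrArg ULift.down h)
    have hA'2 : A'.2 ≠ 1 := fun h => ha (by
      have := congrArg (·⁻¹) h
      simp only [inv_inv, inv_one] at this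
      exact congrArg ULift.down (inv_eq_one.mp (show (ULift.up a : Gfam Γ₁ Γ₂ true)⁻¹ = 1 from h)))
    have hB'2 : B'.2 ≠ 1 := fun h => hb (by
      have := congrArg (·⁻¹) h
      simp only [inv_inv, inv_one] at this
      exact congrArg ULift.down (inv_eq_one.mp (show (ULift.up b : Gfam Γ₁ Γ₂ false)⁻¹ = 1 from h)))
    have hAB : A.1 ≠ B.1 := by simp [hA, hB]
    have hB'A' : B'.1 ≠ A'.1 := by simp [hA', hB']
    set z : Monoid.Coprod Γ₁ Γ₂ := Monoid.Coprod.inl a * Monoid.Coprod.inr b with hz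
    set xf : ℕ → Monoid.Coprod Γ₁ Γ₂ := fun k => z ^ k * Monoid.Coprod.inl a with hxf
    have hphiz : phi Γ₁ Γ₂ z = Monoid.CoprodI.of A.2 * Monoid.CoprodI.of B.2 := by
      rw [hz, map_mul, phi_inl, phi_inr]
    have hphix : ∀ k, phi Γ₁ Γ₂ (xf k) = (altWord hA2 hB2 hAB k).prod := by
      intro k
      rw [altWord_prod, hxf]
      simp only [map_mul, map_pow, hphiz, phi_inl]
      rfl
    -- value of fcn at xf k
    have hf0 : ∀ k, fcn (xf k) = 0 := by
      intro k
      rw [fcn, hphix, fC_altWord_prod]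
      simp [hA]
    -- value of fcn at (z^n)⁻¹ * xf k for k < n
    have hf1 : ∀ k, k < n → fcn ((z ^ n)⁻¹ * xf k) = 1 := by
      intro k hk
      obtain ⟨m, hm⟩ : ∃ m, n = k + (m + 1) :=
        ⟨n - k - 1, by omega⟩
      have hx : (z ^ n)⁻¹ * xf k = (z ^ (m + 1))⁻¹ * Monoid.Coprod.inl a := by
        rw [hxf, hm, pow_add, mul_inv_rev, mul_assoc, inv_mul_cancel_left]
      have hphi : phi Γ₁ Γ₂ ((z ^ n)⁻¹ * xf k) = (altWord hB'2 hA'2 hB'A' m).prod := by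
        rw [hx, altWord_prod, map_mul, map_inv, map_pow, hphiz, phi_inl]
        have h1 : Monoid.CoprodI.of (M := Gfam Γ₁ Γ₂) B'.2 = (Monoid.CoprodI.of B.2)⁻¹ := by
          rw [hB', hB]; exact map_inv _ _
        have h2 : Monoid.CoprodI.of (M := Gfam Γ₁ Γ₂) A'.2 = (Monoid.CoprodI.of A.2)⁻¹ := by
          rw [hA', hA]; exact map_inv _ _
        rw [h1, h2, pow_inv_mul]
      rw [fcn, hphi, fC_altWord_prod]
      simp [hB']
    -- injectivity of xf
    have hinj : Function.Injective xf := by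
      intro k j hkj
      have h1 := congrArg (fun y => ((Monoid.CoprodI.Word.equiv (phi Γ₁ Γ₂ y)).toList.length)) hkj
      simp only [hphix, equiv_prod] at h1
      have h2 : 2 * k + 1 = 2 * j + 1 := by
        simpa [altWord, altList_length] using h1
      omega
    -- the sum bound
    set T : Finset (Monoid.Coprod Γ₁ Γ₂) := (Finset.range n).image xf with hT
    have hsum : ∑ x ∈ T, ‖c (z ^ n) x‖ ^ (2 : ENNReal).toReal = n := by
      rw [hT, Finset.sum_image (fun i _ j _ h => hinj h)]
      have : ∀ k ∈ Finset.range n, ‖c (z ^ n) (xf k)‖ ^ (2 : ENNReal).toReal = 1 := by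
        intro k hk
        rw [happ, Fcn, hf1 k (Finset.mem_range.mp hk), hf0 k, sub_zero]
        simp
      rw [Finset.sum_congr rfl this]
      simp
    have hle := lp.sum_rpow_le_norm_rpow htoReal (c (z ^ n)) T
    rw [hsum] at hle
    have hle2 : ‖c (z ^ n)‖ ^ (2 : ENNReal).toReal ≤ M ^ (2:ℝ) := by
      have := Real.rpow_le_rpow (norm_nonneg _) (hMnorm (z ^ n)) (le_of_lt htoReal)
      simpa using this
    have : (n : ℝ) ≤ M ^ (2:ℝ) := le_trans hle hle2
    linarith
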